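/- Let X, Y be subsets of the positive integers and n ≥ 1 an integer with n+1 ∈ Y − X. Then for all k ≥ 0, V_{n+1,k}^{X,Y} = (x_n − (k−1)) · V_{n,k−1}^{X,Y} + (n+1 − (x_n − k)) · V_{n,k}^{X,Y}, where the term with V_{n,k−1}^{X,Y} is omitted when k = 0. -/

import Mathlib

/-- `cnt X n` is `|X ∩ [n]|` where `[n] = {1, ..., n}`. -/
noncomputable def cnt (X : Set ℕ) (n : ℕ) : ℕ := (X ∩ Set.Icc 1 n).ncard

/-- `val_{X,Y}(σ)`: number of positions `i ∈ [n]` with `i ∈ X` and `σ_i ∈ Y`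
(positions and values of `Fin n` are identified with `{1, ..., n}` via `i ↦ i + 1`). -/
noncomputable def valCount (X Y : Set ℕ) (n : ℕ) (σ : Equiv.Perm (Fin n)) : ℕ :=
  {i : Fin n | ((i : ℕ) + 1) ∈ X ∧ (((σ i : ℕ)) + 1) ∈ Y}.ncard

/-- `V_{n,k}^{X,Y}`: the number of permutations of `[n]` with exactly `k`
`(X,Y)`-place-value pairs. -/
noncomputable def V (X Y : Set ℕ) (n k : ℕ) : ℕ :=
  Nat.card {σ : Equiv.Perm (Fin n) | valCount X Y n σ = k}

open Finset Equiv

open scoped Classical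

noncomputable def extPerm {n : ℕ} (τ : Perm (Fin n)) : Perm (Fin (n+1)) :=
  finSuccEquivLast.symm.permCongr τ.optionCongr

@[simp] lemma extPerm_castSucc {n : ℕ} (τ : Perm (Fin n)) (i : Fin n) :
    extPerm τ (Fin.castSucc i) = Fin.castSucc (τ i) := by
  simp [extPerm, Equiv.permCongr_apply]

@[simp] lemma extPerm_last {n : ℕ} (τ : Perm (Fin n)) :
    extPerm τ (Fin.last n) = Fin.last n := by
  simp [extPerm, Equiv.permCongr_apply]

noncomputable def ins {n : ℕ} (p : Perm (Fin n) × Fin (n+1)) : Perm (Fin (n+1)) :=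
  extPerm p.1 * Equiv.swap p.2 (Fin.last n)

lemma ins_apply_snd {n : ℕ} (p : Perm (Fin n) × Fin (n+1)) :
    ins p p.2 = Fin.last n := by
  simp [ins, Equiv.Perm.mul_apply]

lemma extPerm_injective {n : ℕ} : Function.Injective (extPerm (n := n)) := by
  intro τ τ' h
  apply Equiv.ext
  intro i
  have := congrArg (· (Fin.castSucc i)) h
  simpa [Fin.castSucc_inj] using this

lemma ins_bijective {n : ℕ} : Function.Bijective (ins (n := n)) := by
  rw [Fintype.bijective_iff_injective_and_card]
  constructor
  · rintro ⟨τ, i⟩ ⟨τ', i'⟩ hEq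
    have hi : i = i' := by
      have h1 : ins (τ, i) i = Fin.last n := ins_apply_snd (τ, i)
      have h2 : ins (τ', i') i' = Fin.last n := ins_apply_snd (τ', i')
      rw [hEq] at h1
      exact (ins (τ', i')).injective (h1.trans h2.symm)
    subst hi
    have : extPerm τ = extPerm τ' := by
      have := congrArg (· * Equiv.swap i (Fin.last n)) hEq
      simpa [ins, mul_assoc] using this
    rw [extPerm_injective this]
  · simp [Fintype.card_perm, Nat.factorial_succ, mul_comm]

lemma natCard_setOf_eq_sum {α : Type*} [Fintype α] (P : α → Prop) [DecidablePred P] :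
    Nat.card {x : α | P x} = ∑ x : α, if P x then 1 else 0 := by
  rw [Nat.card_coe_set_eq, ← Finset.card_filter]
  rw [← Set.ncard_coe_finset]
  congr 1
  ext x
  simp

lemma valCount_eq_sum (X Y : Set ℕ) (n : ℕ) (σ : Perm (Fin n)) :
    valCount X Y n σ =
      ∑ i : Fin n, if ((i : ℕ) + 1 ∈ X ∧ ((σ i : ℕ) + 1 ∈ Y)) then 1 else 0 := by
  rw [valCount, ← Finset.card_filter, ← Set.ncard_coe_finset]
  congr 1
  ext i
  simp

lemma V_eq_sum (X Y : Set ℕ) (n k : ℕ) :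
    V X Y n k = ∑ σ : Perm (Fin n), if valCount X Y n σ = k then 1 else 0 := by
  rw [V, natCard_setOf_eq_sum]

lemma cnt_eq_sum (X : Set ℕ) (m : ℕ) :
    cnt X m = ∑ i : Fin m, if ((i : ℕ) + 1 ∈ X) then 1 else 0 := by
  rw [← Finset.card_filter]
  have h1 : X ∩ Set.Icc 1 m = ↑((Finset.Icc 1 m).filter (· ∈ X)) := by
    ext x
    simp only [Set.mem_inter_iff, Set.mem_Icc, Finset.coe_filter, Finset.mem_Icc,
      Set.mem_setOf_eq]
    tauto
  rw [cnt, h1, Set.ncard_coe_finset]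
  have h2 : Finset.Icc 1 m =
      Finset.map ⟨fun i : Fin m => (i : ℕ) + 1, fun a b h => Fin.ext (by simpa using h)⟩
        Finset.univ := by
    ext x
    simp only [Finset.mem_Icc, Finset.mem_map, Finset.mem_univ, true_and,
      Function.Embedding.coeFn_mk]
    constructor
    · rintro ⟨h1x, h2x⟩
      exact ⟨⟨x - 1, by omega⟩, by show x - 1 + 1 = x; omega⟩
    · rintro ⟨i, rfl⟩
      have := i.isLt
      show 1 ≤ (i : ℕ) + 1 ∧ (i : ℕ) + 1 ≤ m
      omega
  rw [h2, Finset.filter_map, Finset.card_map]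
  rfl

lemma valCount_le_cnt (X Y : Set ℕ) (m : ℕ) (σ : Perm (Fin m)) :
    valCount X Y m σ ≤ cnt X m := by
  rw [valCount_eq_sum, cnt_eq_sum]
  apply Finset.sum_le_sum
  intro i _
  split_ifs with h1 h2 h2 <;> simp_all

lemma V_eq_zero_of_lt (X Y : Set ℕ) (n k : ℕ) (hk : cnt X n < k) : V X Y n k = 0 := by
  rw [V_eq_sum]
  apply Finset.sum_eq_zero
  intro σ _
  have := valCount_le_cnt X Y n σ
  simp only [ite_eq_right_iff]
  omega

lemma cnt_le (X : Set ℕ) (m : ℕ) : cnt X m ≤ m := by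
  rw [cnt_eq_sum]
  have h := Finset.sum_le_sum (s := (Finset.univ : Finset (Fin m)))
    (f := fun i : Fin m => if ((i : ℕ) + 1 ∈ X) then 1 else 0) (g := fun _ => 1)
    (fun i _ => by split_ifs <;> simp)
  simpa using h

lemma val_ins_last (X Y : Set ℕ) (n : ℕ) (hX : (n + 1 : ℕ) ∉ X) (τ : Perm (Fin n)) :
    valCount X Y (n + 1) (ins (τ, Fin.last n)) = valCount X Y n τ := by
  have hins : ins (τ, Fin.last n) = extPerm τ := by
    simp [ins, Equiv.swap_self]
    rfl
  rw [hins, valCount_eq_sum, valCount_eq_sum, Fin.sum_univ_castSucc]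
  simp [hX]

lemma val_ins_castSucc (X Y : Set ℕ) (n : ℕ) (hX : (n + 1 : ℕ) ∉ X)
    (hY : (n + 1 : ℕ) ∈ Y) (τ : Perm (Fin n)) (i' : Fin n) :
    valCount X Y (n + 1) (ins (τ, Fin.castSucc i')) =
      valCount X Y n τ + (if ((i' : ℕ) + 1 ∈ X ∧ ¬((τ i' : ℕ) + 1 ∈ Y)) then 1 else 0) := by
  rw [valCount_eq_sum, valCount_eq_sum, Fin.sum_univ_castSucc]
  have hlast : (if (((Fin.last n : Fin (n+1)) : ℕ) + 1 ∈ X ∧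
      ((ins (τ, Fin.castSucc i') (Fin.last n) : ℕ) + 1 ∈ Y)) then 1 else 0) = 0 := by
    simp [hX]
  rw [hlast, add_zero]
  have key : ∀ j : Fin n,
      (if (((Fin.castSucc j : Fin (n+1)) : ℕ) + 1 ∈ X ∧
          ((ins (τ, Fin.castSucc i') (Fin.castSucc j) : ℕ) + 1 ∈ Y)) then 1 else 0)
      = (if ((j : ℕ) + 1 ∈ X ∧ ((τ j : ℕ) + 1 ∈ Y)) then 1 else 0)
        + (if j = i' then (if ((i' : ℕ) + 1 ∈ X ∧ ¬((τ i' : ℕ) + 1 ∈ Y)) then 1 else 0)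
            else 0) := by
    intro j
    by_cases hj : j = i'
    · subst hj
      rw [ins_apply_snd (τ, Fin.castSucc j)]
      simp only [Fin.coe_castSucc, Fin.val_last, if_pos rfl]
      by_cases hx : (j : ℕ) + 1 ∈ X <;> by_cases hy : (τ j : ℕ) + 1 ∈ Y <;>
        simp [hx, hy, hY]
    · have hins : ins (τ, Fin.castSucc i') (Fin.castSucc j) = Fin.castSucc (τ j) := by
        rw [ins]
        simp only [Equiv.Perm.mul_apply]
        rw [Equiv.swap_apply_of_ne_of_ne
          (by simpa [Fin.castSucc_inj] using hj) (Fin.castSucc_lt_last j).ne]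
        exact extPerm_castSucc τ j
      simp [hins, hj]
  rw [Finset.sum_congr rfl (fun j _ => key j), Finset.sum_add_distrib,
    Finset.sum_ite_eq' Finset.univ i']
  simp

lemma sum_delta (X Y : Set ℕ) (n : ℕ) (τ : Perm (Fin n)) :
    valCount X Y n τ +
      (∑ i' : Fin n, if ((i' : ℕ) + 1 ∈ X ∧ ¬((τ i' : ℕ) + 1 ∈ Y)) then 1 else 0) =
      cnt X n := by
  rw [valCount_eq_sum, cnt_eq_sum, ← Finset.sum_add_distrib]
  apply Finset.sum_congr rfl
  intro i _
  by_cases hx : (i : ℕ) + 1 ∈ X <;> by_cases hy : (τ i : ℕ) + 1 ∈ Y <;> simp [hx, hy]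

lemma valIns_inner_sum (X Y : Set ℕ) (n k : ℕ) (hX : (n + 1 : ℕ) ∉ X)
    (hY : (n + 1 : ℕ) ∈ Y) (τ : Perm (Fin n)) :
    (∑ i : Fin (n + 1), if valCount X Y (n + 1) (ins (τ, i)) = k then 1 else 0)
    = (if valCount X Y n τ = k then (n + 1 - (cnt X n - k)) else 0)
      + (if k ≠ 0 ∧ valCount X Y n τ = k - 1 then cnt X n - (k - 1) else 0) := by
  have hcnt : cnt X n ≤ n := cnt_le X n
  rw [Fin.sum_univ_castSucc, val_ins_last X Y n hX τ]
  rw [Finset.sum_congr rfl (fun i' _ => by rw [val_ins_castSucc X Y n hX hY τ i'])]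
  have hD : valCount X Y n τ +
      (∑ i' : Fin n, if ((i' : ℕ) + 1 ∈ X ∧ ¬((τ i' : ℕ) + 1 ∈ Y)) then 1 else 0) =
      cnt X n := sum_delta X Y n τ
  by_cases hak : valCount X Y n τ = k
  · have h1 : (∑ i' : Fin n, if (valCount X Y n τ +
        (if ((i' : ℕ) + 1 ∈ X ∧ ¬((τ i' : ℕ) + 1 ∈ Y)) then 1 else 0)) = k then 1 else 0)
        + (∑ i' : Fin n, if ((i' : ℕ) + 1 ∈ X ∧ ¬((τ i' : ℕ) + 1 ∈ Y)) then 1 else 0)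
        = n := by
      rw [← Finset.sum_add_distrib]
      rw [Finset.sum_congr rfl (fun i' _ => ?_), Finset.sum_const, smul_eq_mul, mul_one,
        Finset.card_univ, Fintype.card_fin]
      by_cases hc : ((i' : ℕ) + 1 ∈ X ∧ ¬((τ i' : ℕ) + 1 ∈ Y))
      · rw [if_pos hc, if_neg (by omega), zero_add]
      · rw [if_neg hc, if_pos (by omega), add_zero]
    have h2 : ¬(k ≠ 0 ∧ valCount X Y n τ = k - 1) := by omega
    rw [if_pos hak, if_pos hak, if_neg h2, add_zero]
    omega
  · by_cases hak1 : valCount X Y n τ + 1 = k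
    · have h1 : (∑ i' : Fin n, if (valCount X Y n τ +
          (if ((i' : ℕ) + 1 ∈ X ∧ ¬((τ i' : ℕ) + 1 ∈ Y)) then 1 else 0)) = k then 1 else 0)
          = ∑ i' : Fin n, if ((i' : ℕ) + 1 ∈ X ∧ ¬((τ i' : ℕ) + 1 ∈ Y)) then 1 else 0 := by
        apply Finset.sum_congr rfl
        intro i' _
        by_cases hc : ((i' : ℕ) + 1 ∈ X ∧ ¬((τ i' : ℕ) + 1 ∈ Y))
        · rw [if_pos hc, if_pos (by omega)]
        · rw [if_neg hc, if_neg (by omega)]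
      have h2 : k ≠ 0 ∧ valCount X Y n τ = k - 1 := by omega
      rw [h1, if_neg hak, if_neg hak, if_pos h2, zero_add, add_zero]
      omega
    · have h1 : (∑ i' : Fin n, if (valCount X Y n τ +
          (if ((i' : ℕ) + 1 ∈ X ∧ ¬((τ i' : ℕ) + 1 ∈ Y)) then 1 else 0)) = k then 1 else 0)
          = 0 := by
        apply Finset.sum_eq_zero
        intro i' _
        by_cases hc : ((i' : ℕ) + 1 ∈ X ∧ ¬((τ i' : ℕ) + 1 ∈ Y))
        · rw [if_pos hc, if_neg (by omega)]
        · rw [if_neg hc, if_neg (by omega)]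
      have h2 : ¬(k ≠ 0 ∧ valCount X Y n τ = k - 1) := by omega
      rw [h1, if_neg hak, if_neg hak, if_neg h2]

lemma main_nat (X Y : Set ℕ) (n k : ℕ) (hX : (n + 1 : ℕ) ∉ X) (hY : (n + 1 : ℕ) ∈ Y) :
    V X Y (n + 1) k =
      (if k = 0 then 0 else (cnt X n - (k - 1)) * V X Y n (k - 1))
      + ((n + 1) - (cnt X n - k)) * V X Y n k := by
  have h1 : V X Y (n + 1) k =
      ∑ p : Perm (Fin n) × Fin (n + 1), if valCount X Y (n + 1) (ins p) = k then 1 else 0 := by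
    rw [V, show Nat.card {σ : Perm (Fin (n + 1)) | valCount X Y (n + 1) σ = k}
        = Nat.card {p : Perm (Fin n) × Fin (n + 1) | valCount X Y (n + 1) (ins p) = k} from
      (Nat.card_congr (Equiv.subtypeEquiv (Equiv.ofBijective _ ins_bijective)
        (fun p => Iff.rfl))).symm]
    exact natCard_setOf_eq_sum _
  have e1 : ∀ (k' c : ℕ),
      (∑ τ : Perm (Fin n), if valCount X Y n τ = k' then c else 0) = c * V X Y n k' := by
    intro k' c
    rw [V_eq_sum, Finset.mul_sum]
    apply Finset.sum_congr rfl
    intro τ _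
    split_ifs <;> simp
  rw [h1, Fintype.sum_prod_type]
  rw [Finset.sum_congr rfl (fun τ _ => valIns_inner_sum X Y n k hX hY τ)]
  rw [Finset.sum_add_distrib, e1]
  by_cases hk : k = 0
  · subst hk
    rw [if_pos rfl, zero_add]
    have hz : (∑ τ : Perm (Fin n),
        if (0 : ℕ) ≠ 0 ∧ valCount X Y n τ = 0 - 1 then cnt X n - (0 - 1) else 0) = 0 :=
      Finset.sum_eq_zero (fun τ _ => by simp)
    rw [hz, add_zero]
  · simp only [ne_eq, hk, not_false_eq_true, true_and, if_neg hk]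
    rw [e1]
    exact Nat.add_comm _ _

/-- Recurrence for `V_{n,k}^{X,Y}` when `n+1 ∈ Y - X`:
`V_{n+1,k} = (x_n - (k-1)) V_{n,k-1} + (n+1 - (x_n - k)) V_{n,k}`,
the first term being omitted when `k = 0`. -/
theorem V_rec_case4 (X Y : Set ℕ) (hX : 0 ∉ X) (hY : 0 ∉ Y) (n : ℕ) (hn : 1 ≤ n)
    (h : n + 1 ∈ Y \ X) (k : ℕ) :
    (V X Y (n + 1) k : ℤ) =
      (if k = 0 then 0 else
        ((cnt X n : ℤ) - ((k : ℤ) - 1)) * (V X Y n (k - 1) : ℤ)) +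
        ((n : ℤ) + 1 - ((cnt X n : ℤ) - (k : ℤ))) * (V X Y n k : ℤ) := by
  have hX' : (n + 1 : ℕ) ∉ X := h.2
  have hY' : (n + 1 : ℕ) ∈ Y := h.1
  have hcnt : cnt X n ≤ n := cnt_le X n
  have hmain := main_nat X Y n k hX' hY'
  by_cases hk : k = 0
  · subst hk
    rw [if_pos rfl, zero_add]
    rw [if_pos rfl, zero_add] at hmain
    rw [hmain, Nat.cast_mul]
    have c2 : (((n + 1) - (cnt X n - 0) : ℕ) : ℤ) = (n : ℤ) + 1 - ((cnt X n : ℤ) - (0 : ℕ)) := by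
      omega
    rw [c2]
  · rw [if_neg hk] at hmain ⊢
    by_cases hkc : k ≤ cnt X n
    · rw [hmain, Nat.cast_add, Nat.cast_mul, Nat.cast_mul]
      have c1 : ((cnt X n - (k - 1) : ℕ) : ℤ) = (cnt X n : ℤ) - ((k : ℤ) - 1) := by omega
      have c2 : (((n + 1) - (cnt X n - k) : ℕ) : ℤ) = (n : ℤ) + 1 - ((cnt X n : ℤ) - (k : ℤ)) := by
        omega
      rw [c1, c2]
    · push_neg at hkc
      have hV0 : V X Y n k = 0 := V_eq_zero_of_lt X Y n k hkc
      have hV0' : V X Y (n + 1) k = 0 := by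
        apply V_eq_zero_of_lt
        have : cnt X (n + 1) = cnt X n := by
          rw [cnt, cnt]
          congr 1
          ext x
          simp only [Set.mem_inter_iff, Set.mem_Icc]
          constructor
          · rintro ⟨hx1, hx2, hx3⟩
            refine ⟨hx1, hx2, ?_⟩
            rcases Nat.lt_or_ge x (n + 1) with h' | h'
            · omega
            · have : x = n + 1 := by omega
              subst this
              exact absurd hx1 hX'
          · rintro ⟨hx1, hx2, hx3⟩
            exact ⟨hx1, hx2, by omega⟩
        omega
      rw [hV0, hV0']
      by_cases hk1c : k - 1 ≤ cnt X n
      · have hc1 : (cnt X n : ℤ) - ((k : ℤ) - 1) = 0 := by omega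
        simp [hc1]
      · have hV1 : V X Y n (k - 1) = 0 := V_eq_zero_of_lt X Y n (k - 1) (by omega)
        simp [hV1]
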